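/- arXiv:1701.01435 — 2 statements merged into one kernel-verified Lean document; each statement's English description precedes it below -/
import Mathlib

section
/- For every nonzero integer k, the Fourier coefficient of the potential V satisfies \hat V_k = (2R^3/L) * ( -sin(z_k)/z_k^3 + (1-\alpha) * cos(z_k)/z_k^2 + \alpha/z_k^2 ), where \alpha = \ell/R and z_k = \pi R |k| / L. -/
open Real MeasureTheory

/-- The 1D interaction potential: `V x = (|x| - ℓ)^2 - (R - ℓ)^2` for `|x| < R`, `0` otherwise. -/
noncomputable def potV (R ℓ : ℝ) (x : ℝ) : ℝ :=
  if |x| < R then (|x| - ℓ) ^ 2 - (R - ℓ) ^ 2 else 0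

/-- The `k`-th Fourier coefficient of `V` on the periodic domain `[-L, L]`. -/
noncomputable def VhatC (L R ℓ : ℝ) (k : ℤ) : ℂ :=
  (1 / (2 * L)) *
    ∫ x in (-L)..L, (potV R ℓ x : ℂ) *
      Complex.exp (-(Complex.I * (π : ℂ) * (k : ℂ) * (x : ℂ) / (L : ℂ)))

lemma potV_eq_min (R ℓ x : ℝ) : potV R ℓ x = (min |x| R - ℓ) ^ 2 - (R - ℓ) ^ 2 := by
  unfold potV
  by_cases h : |x| < R
  · rw [if_pos h, min_eq_left h.le]
  · rw [if_neg h, min_eq_right (not_lt.mp h)]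
    ring

lemma potV_continuous (R ℓ : ℝ) : Continuous (potV R ℓ) := by
  have : potV R ℓ = fun x => (min |x| R - ℓ) ^ 2 - (R - ℓ) ^ 2 := by
    funext x; exact potV_eq_min R ℓ x
  rw [this]
  fun_prop

lemma potV_even (R ℓ x : ℝ) : potV R ℓ (-x) = potV R ℓ x := by
  simp [potV, abs_neg]

/-- FTC computation of the cosine integral on `[0, R]`. -/
lemma cos_integral (R ℓ a : ℝ) (ha : a ≠ 0) :
    ∫ x in (0:ℝ)..R, ((x - ℓ) ^ 2 - (R - ℓ) ^ 2) * Real.cos (a * x) =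
      2 * (R - ℓ) * Real.cos (a * R) / a ^ 2 - 2 * Real.sin (a * R) / a ^ 3 + 2 * ℓ / a ^ 2 := by
  set F : ℝ → ℝ := fun x => ((x - ℓ) ^ 2 - (R - ℓ) ^ 2) * Real.sin (a * x) / a
      + 2 * (x - ℓ) * Real.cos (a * x) / a ^ 2 - 2 * Real.sin (a * x) / a ^ 3 with hF
  have hderiv : ∀ x ∈ Set.uIcc (0:ℝ) R,
      HasDerivAt F (((x - ℓ) ^ 2 - (R - ℓ) ^ 2) * Real.cos (a * x)) x := by
    intro x _
    have hax : HasDerivAt (fun x : ℝ => a * x) a x := by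
      simpa using (hasDerivAt_id x).const_mul a
    have hsin : HasDerivAt (fun x : ℝ => Real.sin (a * x)) (Real.cos (a * x) * a) x := hax.sin
    have hcos : HasDerivAt (fun x : ℝ => Real.cos (a * x)) (-Real.sin (a * x) * a) x := hax.cos
    have hp : HasDerivAt (fun x : ℝ => (x - ℓ) ^ 2 - (R - ℓ) ^ 2) (2 * (x - ℓ)) x := by
      have := (((hasDerivAt_id x).sub_const ℓ).pow 2).sub_const ((R - ℓ) ^ 2)
      simpa using this
    have hlin : HasDerivAt (fun x : ℝ => 2 * (x - ℓ)) 2 x := by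
      simpa using ((hasDerivAt_id x).sub_const ℓ).const_mul 2
    have h1 := (hp.mul hsin).div_const a
    have h2 := (hlin.mul hcos).div_const (a ^ 2)
    have h3 := (hsin.const_mul 2).div_const (a ^ 3)
    have := (h1.add h2).sub h3
    refine this.congr_deriv ?_
    field_simp
    ring
  have hcont : IntervalIntegrable (fun x => ((x - ℓ) ^ 2 - (R - ℓ) ^ 2) * Real.cos (a * x))
      volume 0 R := by
    apply Continuous.intervalIntegrable; fun_prop
  have := intervalIntegral.integral_eq_sub_of_hasDerivAt hderiv hcont
  rw [this, hF]
  simp only [mul_zero, Real.sin_zero, Real.cos_zero]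
  field_simp
  ring

lemma key_identity (L R ℓ a s c : ℝ) (hL : L ≠ 0) (hR : R ≠ 0) (ha : a ≠ 0) :
    1/(2*L) * (2*(2*(R-ℓ)*c/a^2 - 2*s/a^3 + 2*ℓ/a^2)) =
      2*R^3/L * (-s/(a*R)^3 + (1-ℓ/R)*c/(a*R)^2 + (ℓ/R)/(a*R)^2) := by
  field_simp
  ring

theorem fourier_coefficient_formula (L R ℓ : ℝ) (hL : 0 < L) (hR : 0 < R) (hRL : R ≤ L)
    (hℓ : 0 ≤ ℓ) (k : ℤ) (hk : k ≠ 0) :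
    VhatC L R ℓ k =
      (((2 * R ^ 3 / L) *
        (-(Real.sin (π * R * |(k : ℝ)| / L)) / (π * R * |(k : ℝ)| / L) ^ 3 +
          (1 - ℓ / R) * Real.cos (π * R * |(k : ℝ)| / L) / (π * R * |(k : ℝ)| / L) ^ 2 +
          (ℓ / R) / (π * R * |(k : ℝ)| / L) ^ 2) : ℝ) : ℂ) := by
  have hL0 : (L : ℝ) ≠ 0 := ne_of_gt hL
  have hR0 : (R : ℝ) ≠ 0 := ne_of_gt hR
  have hk0 : ((k : ℝ)) ≠ 0 := Int.cast_ne_zero.mpr hk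
  obtain ⟨a, ha_def⟩ : ∃ a : ℝ, a = π * k / L := ⟨_, rfl⟩
  have ha : a ≠ 0 := by
    rw [ha_def]
    exact div_ne_zero (mul_ne_zero Real.pi_ne_zero hk0) hL0
  -- continuity facts
  have hVc := potV_continuous R ℓ
  have hcontc : Continuous fun x => potV R ℓ x * Real.cos (a * x) := by fun_prop
  have hconts : Continuous fun x => potV R ℓ x * Real.sin (a * x) := by fun_prop
  -- the sine integral vanishes
  have hsin_int : (∫ x in (-L)..L, potV R ℓ x * Real.sin (a * x)) = 0 := by
    have hneg : (∫ x in (0:ℝ)..L, potV R ℓ (-x) * Real.sin (a * -x))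
        = ∫ x in (-L)..(-(0:ℝ)), potV R ℓ x * Real.sin (a * x) :=
      intervalIntegral.integral_comp_neg (fun x => potV R ℓ x * Real.sin (a * x))
    rw [neg_zero] at hneg
    have heq : (∫ x in (0:ℝ)..L, potV R ℓ (-x) * Real.sin (a * -x))
        = -∫ x in (0:ℝ)..L, potV R ℓ x * Real.sin (a * x) := by
      rw [← intervalIntegral.integral_neg]
      congr 1; funext x
      rw [potV_even, mul_neg, Real.sin_neg]
      ring
    have hsplit : (∫ x in (-L)..L, potV R ℓ x * Real.sin (a * x))
        = (∫ x in (-L)..(0:ℝ), potV R ℓ x * Real.sin (a * x))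
          + ∫ x in (0:ℝ)..L, potV R ℓ x * Real.sin (a * x) :=
      (intervalIntegral.integral_add_adjacent_intervals
        (hconts.intervalIntegrable _ _) (hconts.intervalIntegrable _ _)).symm
    rw [hsplit, ← hneg, heq]
    ring
  -- the cosine integral
  have hcos_int : (∫ x in (-L)..L, potV R ℓ x * Real.cos (a * x)) =
      2 * (2 * (R - ℓ) * Real.cos (a * R) / a ^ 2 - 2 * Real.sin (a * R) / a ^ 3
        + 2 * ℓ / a ^ 2) := by
    have hneg : (∫ x in (0:ℝ)..L, potV R ℓ (-x) * Real.cos (a * -x))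
        = ∫ x in (-L)..(-(0:ℝ)), potV R ℓ x * Real.cos (a * x) :=
      intervalIntegral.integral_comp_neg (fun x => potV R ℓ x * Real.cos (a * x))
    rw [neg_zero] at hneg
    have heq : (∫ x in (0:ℝ)..L, potV R ℓ (-x) * Real.cos (a * -x))
        = ∫ x in (0:ℝ)..L, potV R ℓ x * Real.cos (a * x) := by
      congr 1; funext x
      rw [potV_even, mul_neg, Real.cos_neg]
    have hsplit : (∫ x in (-L)..L, potV R ℓ x * Real.cos (a * x))
        = (∫ x in (-L)..(0:ℝ), potV R ℓ x * Real.cos (a * x))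
          + ∫ x in (0:ℝ)..L, potV R ℓ x * Real.cos (a * x) :=
      (intervalIntegral.integral_add_adjacent_intervals
        (hcontc.intervalIntegrable _ _) (hcontc.intervalIntegrable _ _)).symm
    have hhalf : (∫ x in (0:ℝ)..L, potV R ℓ x * Real.cos (a * x))
        = 2 * (R - ℓ) * Real.cos (a * R) / a ^ 2 - 2 * Real.sin (a * R) / a ^ 3
          + 2 * ℓ / a ^ 2 := by
      have hsplit2 : (∫ x in (0:ℝ)..L, potV R ℓ x * Real.cos (a * x))
          = (∫ x in (0:ℝ)..R, potV R ℓ x * Real.cos (a * x))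
            + ∫ x in R..L, potV R ℓ x * Real.cos (a * x) :=
        (intervalIntegral.integral_add_adjacent_intervals
          (hcontc.intervalIntegrable _ _) (hcontc.intervalIntegrable _ _)).symm
      have htail : (∫ x in R..L, potV R ℓ x * Real.cos (a * x)) = 0 := by
        rw [intervalIntegral.integral_congr (g := fun _ => (0:ℝ))]
        · simp
        · intro x hx
          rw [Set.uIcc_of_le hRL] at hx
          have hxR : R ≤ |x| := by
            rw [abs_of_nonneg (le_trans hR.le hx.1)]; exact hx.1
          simp [potV, not_lt.mpr hxR]
      have hmain : (∫ x in (0:ℝ)..R, potV R ℓ x * Real.cos (a * x))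
          = ∫ x in (0:ℝ)..R, ((x - ℓ) ^ 2 - (R - ℓ) ^ 2) * Real.cos (a * x) := by
        apply intervalIntegral.integral_congr
        intro x hx
        rw [Set.uIcc_of_le hR.le] at hx
        show potV R ℓ x * Real.cos (a * x) = ((x - ℓ) ^ 2 - (R - ℓ) ^ 2) * Real.cos (a * x)
        rw [potV_eq_min, abs_of_nonneg hx.1, min_eq_left hx.2]
      rw [hsplit2, htail, hmain, cos_integral R ℓ a ha, add_zero]
    rw [hsplit, ← hneg, heq, hhalf]
    ring
  -- rewrite the complex integrand
  have hintegrand : ∀ x : ℝ, (potV R ℓ x : ℂ) *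
      Complex.exp (-(Complex.I * (π : ℂ) * (k : ℂ) * (x : ℂ) / (L : ℂ)))
      = ((potV R ℓ x * Real.cos (a * x) : ℝ) : ℂ)
        + ((-(potV R ℓ x * Real.sin (a * x)) : ℝ) : ℂ) * Complex.I := by
    intro x
    have h1 : -(Complex.I * (π : ℂ) * (k : ℂ) * (x : ℂ) / (L : ℂ))
        = ((-(a * x) : ℝ) : ℂ) * Complex.I := by
      rw [ha_def]
      push_cast
      field_simp
    rw [h1, Complex.exp_mul_I, ← Complex.ofReal_cos, ← Complex.ofReal_sin,
      Real.cos_neg, Real.sin_neg]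
    push_cast
    ring
  have hint : (∫ x in (-L)..L, (potV R ℓ x : ℂ) *
      Complex.exp (-(Complex.I * (π : ℂ) * (k : ℂ) * (x : ℂ) / (L : ℂ))))
      = ((∫ x in (-L)..L, potV R ℓ x * Real.cos (a * x) : ℝ) : ℂ) := by
    calc (∫ x in (-L)..L, (potV R ℓ x : ℂ) *
        Complex.exp (-(Complex.I * (π : ℂ) * (k : ℂ) * (x : ℂ) / (L : ℂ))))
        = ∫ x in (-L)..L, (((potV R ℓ x * Real.cos (a * x) : ℝ) : ℂ)
            + ((-(potV R ℓ x * Real.sin (a * x)) : ℝ) : ℂ) * Complex.I) := by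
          congr 1; funext x; exact hintegrand x
      _ = (∫ x in (-L)..L, ((potV R ℓ x * Real.cos (a * x) : ℝ) : ℂ))
            + ∫ x in (-L)..L, ((-(potV R ℓ x * Real.sin (a * x)) : ℝ) : ℂ) * Complex.I := by
          apply intervalIntegral.integral_add
          · apply Continuous.intervalIntegrable
            fun_prop
          · apply Continuous.intervalIntegrable
            fun_prop
      _ = ((∫ x in (-L)..L, potV R ℓ x * Real.cos (a * x) : ℝ) : ℂ)
            + ((∫ x in (-L)..L, -(potV R ℓ x * Real.sin (a * x)) : ℝ) : ℂ) * Complex.I := by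
          rw [intervalIntegral.integral_mul_const, intervalIntegral.integral_ofReal,
            intervalIntegral.integral_ofReal]
      _ = ((∫ x in (-L)..L, potV R ℓ x * Real.cos (a * x) : ℝ) : ℂ) := by
          rw [intervalIntegral.integral_neg, hsin_int]
          simp
  rw [VhatC, hint, hcos_int]
  have hcast : ((1 : ℂ) / (2 * (L : ℂ))) = ((1 / (2 * L) : ℝ) : ℂ) := by push_cast; ring
  rw [hcast, ← Complex.ofReal_mul]
  congr 1
  -- now a real identity
  rcases lt_or_gt_of_ne hk with hkneg | hkpos
  · have habs : |(k : ℝ)| = -(k : ℝ) := abs_of_neg (by exact_mod_cast hkneg)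
    rw [habs]
    have h1 : π * R * -(k : ℝ) / L = -(a * R) := by rw [ha_def]; ring
    rw [h1, Real.sin_neg, Real.cos_neg,
      show (-(a * R)) ^ 3 = -(a * R) ^ 3 by ring,
      show (-(a * R)) ^ 2 = (a * R) ^ 2 by ring, neg_div_neg_eq]
    exact key_identity L R ℓ a (Real.sin (a * R)) (Real.cos (a * R)) hL0 hR0 ha
  · have habs : |(k : ℝ)| = (k : ℝ) := abs_of_pos (by exact_mod_cast hkpos)
    rw [habs]
    have h1 : π * R * (k : ℝ) / L = a * R := by rw [ha_def]; ring
    rw [h1]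
    exact key_identity L R ℓ a (Real.sin (a * R)) (Real.cos (a * R)) hL0 hR0 ha
end

section
/- Let L = 3, R = 3/4, \ell \ge 0, D > 0, and set \alpha = \ell/R and \alpha_c = (4-\pi)(\sqrt{2}+1)/\pi. Then the constant steady state is linearly unstable in the first mode, i.e. D + \hat V_1 < 0, if and only if \alpha < \alpha_c and R^2 > D \pi^2 (2+\sqrt{2}) / (8(\alpha_c - \alpha)). -/
open Real MeasureTheory

/-- An antiderivative of `x ↦ ((x+b)^2 - C) * cos (c*x)`. -/
noncomputable def Fanti (c b C x : ℝ) : ℝ :=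
  ((x + b) ^ 2 - C) * Real.sin (c * x) / c + 2 * (x + b) * Real.cos (c * x) / c ^ 2
    - 2 * Real.sin (c * x) / c ^ 3

lemma piece_integral (c : ℝ) (hc : c ≠ 0) (b C lo hi : ℝ) :
    ∫ x in lo..hi, ((x + b) ^ 2 - C) * Real.cos (c * x)
      = Fanti c b C hi - Fanti c b C lo := by
  apply intervalIntegral.integral_eq_sub_of_hasDerivAt
  · intro x _
    have hcx : HasDerivAt (fun x : ℝ => c * x) c x := by
      simpa using (hasDerivAt_id x).const_mul c
    have hs : HasDerivAt (fun x : ℝ => Real.sin (c * x)) (Real.cos (c * x) * c) x := hcx.sin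
    have hK : HasDerivAt (fun x : ℝ => Real.cos (c * x)) (-Real.sin (c * x) * c) x := hcx.cos
    have hp : HasDerivAt (fun x : ℝ => (x + b) ^ 2 - C) (2 * (x + b)) x := by
      have := (((hasDerivAt_id x).add_const b).pow 2).sub_const C
      simpa using this
    have hq : HasDerivAt (fun x : ℝ => 2 * (x + b)) 2 x := by
      simpa using ((hasDerivAt_id x).add_const b).const_mul 2
    have h1 := (hp.mul hs).div_const c
    have h2 := (hq.mul hK).div_const (c ^ 2)
    have h3 := (hs.const_mul 2).div_const (c ^ 3)
    have := (h1.add h2).sub h3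
    convert this using 1
    · funext y
      simp only [Fanti, Pi.add_apply, Pi.sub_apply, Pi.mul_apply]
    rw [div_add_div _ _ hc (pow_ne_zero 2 hc), div_sub_div _ _ (mul_ne_zero hc (pow_ne_zero 2 hc))
      (pow_ne_zero 3 hc), eq_div_iff (mul_ne_zero (mul_ne_zero hc (pow_ne_zero 2 hc)) (pow_ne_zero 3 hc))]
    ring
  · exact (by fun_prop :
      Continuous fun x : ℝ => ((x + b) ^ 2 - C) * Real.cos (c * x)).intervalIntegrable _ _

lemma vhat_re (ℓ : ℝ) :
    (VhatC 3 (3 / 4) ℓ 1).re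
      = 9 * Real.sqrt 2 / (4 * π ^ 2) + ℓ * (6 - 3 * Real.sqrt 2) / π ^ 2
        - 9 * Real.sqrt 2 / π ^ 3 := by
  set f : ℝ → ℂ := fun x =>
    (potV (3 / 4) ℓ x : ℂ) * Complex.exp (((-(π / 3 * x) : ℝ) : ℂ) * Complex.I) with hf
  have hVeq : VhatC 3 (3 / 4) ℓ 1 = ((1 / 6 : ℝ) : ℂ) * ∫ x in (-3 : ℝ)..3, f x := by
    rw [VhatC]
    congr 1
    · norm_num
    · apply intervalIntegral.integral_congr
      intro x _
      rw [hf]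
      push_cast
      ring_nf
  -- EqOn facts for potV on the four pieces
  have hc1 : Set.EqOn (potV (3 / 4) ℓ) (fun _ => (0 : ℝ)) (Set.uIcc (-3 : ℝ) (-3 / 4)) := by
    intro x hx
    rw [Set.uIcc_of_le (by norm_num)] at hx
    simp only [potV]
    rw [if_neg]
    rw [abs_of_nonpos (by linarith [hx.2])]
    push_neg
    linarith [hx.2]
  have hc4 : Set.EqOn (potV (3 / 4) ℓ) (fun _ => (0 : ℝ)) (Set.uIcc (3 / 4 : ℝ) 3) := by
    intro x hx
    rw [Set.uIcc_of_le (by norm_num)] at hx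
    simp only [potV]
    rw [if_neg]
    rw [abs_of_nonneg (by linarith [hx.1])]
    push_neg
    linarith [hx.1]
  have hc2 : Set.EqOn (potV (3 / 4) ℓ)
      (fun x => (x + ℓ) ^ 2 - (3 / 4 - ℓ) ^ 2) (Set.uIcc (-3 / 4 : ℝ) 0) := by
    intro x hx
    rw [Set.uIcc_of_le (by norm_num)] at hx
    simp only [potV]
    rw [abs_of_nonpos hx.2]
    split_ifs with h
    · ring
    · have hx34 : x = -(3 / 4) := by
        push_neg at h
        linarith [hx.1]
      rw [hx34]; ring
  have hc3 : Set.EqOn (potV (3 / 4) ℓ)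
      (fun x => (x + -ℓ) ^ 2 - (3 / 4 - ℓ) ^ 2) (Set.uIcc (0 : ℝ) (3 / 4)) := by
    intro x hx
    rw [Set.uIcc_of_le (by norm_num)] at hx
    simp only [potV]
    rw [abs_of_nonneg hx.1]
    split_ifs with h
    · ring
    · have hx34 : x = 3 / 4 := by
        push_neg at h
        linarith [hx.2]
      rw [hx34]; ring
  have cont1 : ContinuousOn (potV (3 / 4) ℓ) (Set.uIcc (-3 : ℝ) (-3 / 4)) :=
    continuousOn_const.congr hc1
  have cont2 : ContinuousOn (potV (3 / 4) ℓ) (Set.uIcc (-3 / 4 : ℝ) 0) :=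
    ((by fun_prop : Continuous fun x : ℝ => (x + ℓ) ^ 2 - (3 / 4 - ℓ) ^ 2).continuousOn).congr hc2
  have cont3 : ContinuousOn (potV (3 / 4) ℓ) (Set.uIcc (0 : ℝ) (3 / 4)) :=
    ((by fun_prop : Continuous fun x : ℝ => (x + -ℓ) ^ 2 - (3 / 4 - ℓ) ^ 2).continuousOn).congr hc3
  have cont4 : ContinuousOn (potV (3 / 4) ℓ) (Set.uIcc (3 / 4 : ℝ) 3) :=
    continuousOn_const.congr hc4
  have hexpc : Continuous fun x : ℝ => Complex.exp (((-(π / 3 * x) : ℝ) : ℂ) * Complex.I) := by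
    fun_prop
  have fcont : ∀ (lo hi : ℝ), ContinuousOn (potV (3 / 4) ℓ) (Set.uIcc lo hi) →
      IntervalIntegrable f volume lo hi := by
    intro lo hi h
    exact ((Complex.continuous_ofReal.comp_continuousOn h).mul
      hexpc.continuousOn).intervalIntegrable
  have i1 := fcont _ _ cont1
  have i2 := fcont _ _ cont2
  have i3 := fcont _ _ cont3
  have i4 := fcont _ _ cont4
  have a12 := intervalIntegral.integral_add_adjacent_intervals i1 i2
  have a123 := intervalIntegral.integral_add_adjacent_intervals (i1.trans i2) i3
  have a := intervalIntegral.integral_add_adjacent_intervals ((i1.trans i2).trans i3) i4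
  have hre : ∀ x : ℝ, (f x).re = potV (3 / 4) ℓ x * Real.cos (π / 3 * x) := by
    intro x
    simp only [hf]
    rw [Complex.re_ofReal_mul, Complex.exp_ofReal_mul_I_re, Real.cos_neg]
  have hswap : ∀ (lo hi : ℝ), IntervalIntegrable f volume lo hi →
      (∫ x in lo..hi, f x).re = ∫ x in lo..hi, potV (3 / 4) ℓ x * Real.cos (π / 3 * x) := by
    intro lo hi h
    have hsw := Complex.reCLM.intervalIntegral_comp_comm h
    simp only [Complex.reCLM_apply] at hsw
    rw [← hsw]
    apply intervalIntegral.integral_congr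
    intro x _
    exact hre x
  have hπ : (π / 3 : ℝ) ≠ 0 := by positivity
  have v1 : (∫ x in (-3 : ℝ)..(-3 / 4), f x).re = 0 := by
    rw [hswap _ _ i1]
    rw [intervalIntegral.integral_congr (g := fun _ => (0 : ℝ)) (fun x hx => by
      simp [hc1 hx])]
    simp
  have v4 : (∫ x in (3 / 4 : ℝ)..3, f x).re = 0 := by
    rw [hswap _ _ i4]
    rw [intervalIntegral.integral_congr (g := fun _ => (0 : ℝ)) (fun x hx => by
      simp [hc4 hx])]
    simp
  have v2 : (∫ x in (-3 / 4 : ℝ)..0, f x).re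
      = Fanti (π / 3) ℓ ((3 / 4 - ℓ) ^ 2) 0 - Fanti (π / 3) ℓ ((3 / 4 - ℓ) ^ 2) (-3 / 4) := by
    rw [hswap _ _ i2]
    rw [intervalIntegral.integral_congr
      (g := fun x => ((x + ℓ) ^ 2 - (3 / 4 - ℓ) ^ 2) * Real.cos (π / 3 * x))
      (fun x hx => by rw [hc2 hx])]
    exact piece_integral _ hπ _ _ _ _
  have v3 : (∫ x in (0 : ℝ)..(3 / 4), f x).re
      = Fanti (π / 3) (-ℓ) ((3 / 4 - ℓ) ^ 2) (3 / 4) - Fanti (π / 3) (-ℓ) ((3 / 4 - ℓ) ^ 2) 0 := by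
    rw [hswap _ _ i3]
    rw [intervalIntegral.integral_congr
      (g := fun x => ((x + -ℓ) ^ 2 - (3 / 4 - ℓ) ^ 2) * Real.cos (π / 3 * x))
      (fun x hx => by rw [hc3 hx])]
    exact piece_integral _ hπ _ _ _ _
  rw [hVeq, Complex.re_ofReal_mul, ← a, ← a123, ← a12]
  simp only [Complex.add_re, v1, v2, v3, v4]
  have e0 : (π / 3 : ℝ) * 0 = 0 := by ring
  have ep : (π / 3 : ℝ) * (3 / 4) = π / 4 := by ring
  have em : (π / 3 : ℝ) * (-3 / 4) = -(π / 4) := by ring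
  simp only [Fanti, e0, ep, em, Real.sin_zero, Real.cos_zero, Real.sin_pi_div_four,
    Real.cos_pi_div_four, Real.sin_neg, Real.cos_neg]
  have hπ0 : (π : ℝ) ≠ 0 := Real.pi_ne_zero
  field_simp
  ring

/-- Instability region for `L = 3`, `R = 3/4`: the first mode of the constant steady state is
linearly unstable (`D + V̂₁ < 0`) iff `α < α_c` and `R² > Dπ²(2 + √2)/(8(α_c - α))`,
where `α = ℓ/R` and `α_c = (4 - π)(√2 + 1)/π`. -/
theorem instability_region_1D (ℓ D : ℝ) (hℓ : 0 ≤ ℓ) (hD : 0 < D) :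
    D + (VhatC 3 (3 / 4) ℓ 1).re < 0 ↔
      ℓ / (3 / 4) < (4 - π) * (Real.sqrt 2 + 1) / π ∧
        (3 / 4 : ℝ) ^ 2 >
          D * π ^ 2 * (2 + Real.sqrt 2) /
            (8 * ((4 - π) * (Real.sqrt 2 + 1) / π - ℓ / (3 / 4))) := by
  rw [vhat_re]
  set s := Real.sqrt 2 with hs
  have hs2 : s ^ 2 = 2 := Real.sq_sqrt (by norm_num)
  have hs1 : 1 < s := by nlinarith [Real.sqrt_nonneg 2]
  have hπ : (0 : ℝ) < π := Real.pi_pos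
  have hπ4 : π < 4 := by linarith [Real.pi_lt_four]
  have hexp : (D + (9 * s / (4 * π ^ 2) + ℓ * (6 - 3 * s) / π ^ 2 - 9 * s / π ^ 3)) * (4 * π ^ 3)
      = 4 * D * π ^ 3 + 9 * s * π + 12 * ℓ * (2 - s) * π - 36 * s := by
    field_simp
    ring
  have hWΔ : (2 + s) * (36 * s - 9 * s * π - 12 * ℓ * (2 - s) * π)
      = 6 * (3 * (4 - π) * (s + 1) - 4 * π * ℓ) := by
    linear_combination (36 - 9 * π + 12 * ℓ * π) * hs2
  have hE : D + (9 * s / (4 * π ^ 2) + ℓ * (6 - 3 * s) / π ^ 2 - 9 * s / π ^ 3) < 0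
      ↔ 4 * D * π ^ 3 < 36 * s - 9 * s * π - 12 * ℓ * (2 - s) * π := by
    constructor
    · intro h
      have hneg := mul_neg_of_neg_of_pos h (by positivity : (0:ℝ) < 4 * π ^ 3)
      rw [hexp] at hneg
      linarith
    · intro h
      by_contra h'
      push_neg at h'
      have := mul_nonneg h' (le_of_lt (by positivity : (0:ℝ) < 4 * π ^ 3))
      rw [hexp] at this
      linarith
  rw [hE]
  by_cases ht : ℓ / (3 / 4) < (4 - π) * (s + 1) / π
  · simp only [ht, true_and]
    have hΔ : 0 < 3 * (4 - π) * (s + 1) - 4 * π * ℓ := by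
      rw [div_lt_div_iff₀ (by norm_num) hπ] at ht
      nlinarith
    have hden : (4 - π) * (s + 1) / π - ℓ / (3 / 4)
        = (3 * (4 - π) * (s + 1) - 4 * π * ℓ) / (3 * π) := by
      field_simp
    rw [hden, gt_iff_lt, div_lt_iff₀ (by positivity), show
      (3 / 4 : ℝ) ^ 2 * (8 * ((3 * (4 - π) * (s + 1) - 4 * π * ℓ) / (3 * π)))
        = (3 * (3 * (4 - π) * (s + 1) - 4 * π * ℓ)) / (2 * π) by field_simp; ring,
      lt_div_iff₀ (by positivity)]
    constructor
    · intro h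
      have hm : (2 + s) * (4 * D * π ^ 3)
          < 6 * (3 * (4 - π) * (s + 1) - 4 * π * ℓ) := by
        rw [← hWΔ]
        exact mul_lt_mul_of_pos_left h (by linarith)
      linarith [hm]
    · intro h
      have h3 : 0 < (2 + s) * ((36 * s - 9 * s * π - 12 * ℓ * (2 - s) * π) - 4 * D * π ^ 3) := by
        nlinarith [hWΔ, h]
      nlinarith [h3, hs1]
  · simp only [ht, false_and, iff_false, not_lt]
    have ht' : (4 - π) * (s + 1) / π ≤ ℓ / (3 / 4) := not_lt.mp ht
    rw [div_le_div_iff₀ hπ (by norm_num)] at ht'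
    have hΔ : 3 * (4 - π) * (s + 1) - 4 * π * ℓ ≤ 0 := by linarith
    have hW : 36 * s - 9 * s * π - 12 * ℓ * (2 - s) * π ≤ 0 := by
      nlinarith [hWΔ, hΔ, hs1]
    have : (0:ℝ) < 4 * D * π ^ 3 := by positivity
    linarith
end
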